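/- Coercivity of the Barbosa–Hughes form with the constructed test functions (key step in the proof of Theorem 4.2): Under the abstract Nitsche/Barbosa–Hughes framework, there exist ζ ∈ (0,1] and a constant C > 0, both depending only on γ, c_t, c_w, c_∂, C_z and c_z, such that for every (u_h, λ_h) ∈ V_h × Λ_h there exists a pair (w_h, μ_h) ∈ V_h × Λ_h of the form w_h = u_h + ζ·φ_∂ and μ_h = λ_h + z(ζ·φ_∂), where φ_∂ is the function provided by the Nitsche stability hypothesis for u_h and z is the map of Assumption A1, satisfying A_BH[(u_h, λ_h), (w_h, μ_h)] ≥ (c_w/2)·‖u_h‖²_{1,h} + (γ/2)·‖j λ_h + d u_h‖²_B and ‖w_h‖_{1,h} + ‖j μ_h‖_B ≤ C·( ‖u_h‖_{1,h} + ‖j λ_h‖_B ). -/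

import Mathlib

set_option maxHeartbeats 1000000

private lemma le_sqrt_sq_add (a b : ℝ) (ha : 0 ≤ a) : a ≤ Real.sqrt (a^2 + b^2) := by
  have h := Real.sqrt_le_sqrt (show a^2 ≤ a^2 + b^2 by nlinarith)
  rwa [Real.sqrt_sq ha] at h

private lemma sqrt_two_triangle (a b c d : ℝ) (ha : 0 ≤ a) (hb : 0 ≤ b) (hc : 0 ≤ c) (hd : 0 ≤ d) :
    Real.sqrt ((a+c)^2 + (b+d)^2) ≤ Real.sqrt (a^2+b^2) + Real.sqrt (c^2+d^2) := by
  set s := Real.sqrt (a^2+b^2) with hs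
  set tt := Real.sqrt (c^2+d^2) with ht
  have hs0 : 0 ≤ s := Real.sqrt_nonneg _
  have ht0 : 0 ≤ tt := Real.sqrt_nonneg _
  have e1 : s^2 = a^2+b^2 := Real.sq_sqrt (by positivity)
  have e2 : tt^2 = c^2+d^2 := Real.sq_sqrt (by positivity)
  have hcs : a*c + b*d ≤ s * tt := by
    nlinarith [sq_nonneg (a*d - b*c), mul_nonneg hs0 ht0, mul_nonneg (mul_nonneg ha hc) (mul_nonneg hb hd)]
  have key : (a+c)^2 + (b+d)^2 ≤ (s + tt)^2 := by nlinarith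
  have := Real.sqrt_le_sqrt key
  rwa [Real.sqrt_sq (by positivity)] at this

private lemma arith_key (ζ K1 K2 R T Gn γ cw : ℝ)
    (hγ : 0 < γ) (hcw : 0 < cw) (hK1 : 0 < K1) (hK2 : 0 < K2)
    (hR : 0 ≤ R) (hT : 0 ≤ T) (hGn : 0 ≤ Gn)
    (hζ : 0 < ζ) (hζ1 : ζ ≤ 1)
    (h1 : ζ * K1^2 ≤ γ * cw / 2) (h2 : ζ * K2 ≤ cw / 2) :
    ζ * K1 * R * T + ζ * K2 * Gn * T ≤ cw/2 * (Gn^2 + T^2) + γ/2 * R^2 := by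
  have hζsq : ζ^2 ≤ ζ := by nlinarith
  have hA : ζ * K1 * R * T ≤ γ/2 * R^2 + cw/4 * T^2 := by
    nlinarith [sq_nonneg (γ*R - ζ*K1*T), mul_le_mul_of_nonneg_right h1 (sq_nonneg T),
      mul_le_mul_of_nonneg_right (mul_le_mul_of_nonneg_right hζsq (sq_nonneg K1)) (sq_nonneg T),
      mul_pos hγ hcw, sq_nonneg T]
  have hB : ζ * K2 * Gn * T ≤ cw/4 * Gn^2 + cw/4 * T^2 := by
    nlinarith [mul_le_mul_of_nonneg_right h2 (mul_nonneg hGn hT), sq_nonneg (Gn - T), hcw.le]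
  nlinarith [mul_nonneg hcw.le (sq_nonneg Gn)]



open scoped RealInnerProductSpace

/-- **Coercivity of the Barbosa–Hughes form with the constructed test functions
(key step in the proof of Theorem 4.2).**
There exist `ζ ∈ (0,1]` and `C > 0` (depending only on `γ, c_t, c_w, c_∂, C_z, c_z`) such
that for every `(u_h, λ_h)` there is a pair `(w_h, μ_h) = (u_h + ζ φ_∂, λ_h + z(ζ φ_∂))`,
with `φ_∂` the function provided by the Nitsche stability hypothesis for `u_h` and `z` the
map of Assumption A1, satisfying
`A_BH[(u_h,λ_h),(w_h,μ_h)] ≥ (c_w/2) ‖u_h‖²_{1,h} + (γ/2) ‖j λ_h + d u_h‖²_B` and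
`‖w_h‖_{1,h} + ‖j μ_h‖_B ≤ C (‖u_h‖_{1,h} + ‖j λ_h‖_B)`.
Here `‖u‖_{1,h} = (‖G u‖² + ‖t u‖²)^{1/2}`,
`A_Nit(u,v) = ⟪G u, G v⟫ − ⟪d u, t v⟫ + ⟪d v, t u⟫` and
`A_BH[(u,λ),(v,μ)] = ⟪G u, G v⟫ + ⟪j λ, t v⟫ − ⟪j μ, t u⟫ + γ ⟪j λ + d u, j μ + d v⟫`. -/
theorem barbosa_hughes_coercivity_key_step
    {X B : Type*} [NormedAddCommGroup X] [InnerProductSpace ℝ X]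
    [NormedAddCommGroup B] [InnerProductSpace ℝ B]
    {Vh Λh : Type*} [AddCommGroup Vh] [Module ℝ Vh] [FiniteDimensional ℝ Vh]
    [AddCommGroup Λh] [Module ℝ Λh] [FiniteDimensional ℝ Λh]
    (G : Vh →ₗ[ℝ] X) (t d : Vh →ₗ[ℝ] B) (j : Λh →ₗ[ℝ] B)
    (hj : Function.Injective j)
    -- ‖·‖_{1,h} is a norm on V_h (only definiteness is not automatic)
    (hdef : ∀ u : Vh, G u = 0 → t u = 0 → u = 0)
    -- stabilisation parameter
    (γ : ℝ) (hγ : 0 < γ)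
    -- discrete trace inequality
    (ct : ℝ) (hct : 0 < ct) (htrace : ∀ u : Vh, ‖d u‖ ≤ ct * ‖G u‖)
    -- stability of the penalty-free non-symmetric Nitsche method
    (cw cb : ℝ) (hcw : 0 < cw) (hcb : 0 < cb)
    (hNit : ∀ ζ : ℝ, 0 < ζ → ζ ≤ 1 → ∀ u : Vh, ∃ φ : Vh,
      Real.sqrt (‖G φ‖ ^ 2 + ‖t φ‖ ^ 2) ≤ cb * ‖t u‖ ∧
      cw * (‖G u‖ ^ 2 + ‖t u‖ ^ 2) ≤
        ⟪G u, G (u + ζ • φ)⟫ - ⟪d u, t (u + ζ • φ)⟫ + ⟪d (u + ζ • φ), t u⟫)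
    -- Assumption [A1], with its map z : V_h → Λ_h
    (Cz cz : ℝ) (hCz : 0 < Cz) (hcz : 0 < cz)
    (z : Vh → Λh)
    (hA1 : ∀ v : Vh,
      (∀ u : Vh, |⟪j (z v) + d v, t u⟫| ≤ Cz * ‖G u‖ * ‖G v‖) ∧
      ‖j (z v)‖ ≤ cz * ‖G v‖) :
    ∃ ζ : ℝ, 0 < ζ ∧ ζ ≤ 1 ∧ ∃ C > 0, ∀ (u : Vh) (lam : Λh), ∃ φ : Vh,
      -- φ is the function provided by the Nitsche stability hypothesis for u at ζ
      (Real.sqrt (‖G φ‖ ^ 2 + ‖t φ‖ ^ 2) ≤ cb * ‖t u‖ ∧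
        cw * (‖G u‖ ^ 2 + ‖t u‖ ^ 2) ≤
          ⟪G u, G (u + ζ • φ)⟫ - ⟪d u, t (u + ζ • φ)⟫ + ⟪d (u + ζ • φ), t u⟫) ∧
      -- coercivity of the Barbosa–Hughes form with w = u + ζ•φ, μ = λ + z(ζ•φ)
      ((cw / 2) * (‖G u‖ ^ 2 + ‖t u‖ ^ 2) + (γ / 2) * ‖j lam + d u‖ ^ 2 ≤
        ⟪G u, G (u + ζ • φ)⟫ + ⟪j lam, t (u + ζ • φ)⟫
          - ⟪j (lam + z (ζ • φ)), t u⟫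
          + γ * ⟪j lam + d u, j (lam + z (ζ • φ)) + d (u + ζ • φ)⟫) ∧
      -- stability of the constructed test pair
      (Real.sqrt (‖G (u + ζ • φ)‖ ^ 2 + ‖t (u + ζ • φ)‖ ^ 2) + ‖j (lam + z (ζ • φ))‖ ≤
        C * (Real.sqrt (‖G u‖ ^ 2 + ‖t u‖ ^ 2) + ‖j lam‖)) := by
  set K1 : ℝ := cb * (1 + γ * (cz + ct)) with hK1def
  set K2 : ℝ := Cz * cb with hK2def
  have hK1 : 0 < K1 := by positivity
  have hK2 : 0 < K2 := by positivity
  set ζ : ℝ := min 1 (min (γ * cw / (2 * K1 ^ 2)) (cw / (2 * K2))) with hζdef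
  have hζ0 : 0 < ζ := by
    apply lt_min one_pos
    apply lt_min <;> positivity
  have hζ1 : ζ ≤ 1 := min_le_left _ _
  have hζa : ζ * K1 ^ 2 ≤ γ * cw / 2 := by
    have h : ζ ≤ γ * cw / (2 * K1 ^ 2) :=
      le_trans (min_le_right (1:ℝ) _) (min_le_left (γ * cw / (2 * K1 ^ 2)) (cw / (2 * K2)))
    calc ζ * K1 ^ 2 ≤ (γ * cw / (2 * K1 ^ 2)) * K1 ^ 2 :=
          mul_le_mul_of_nonneg_right h (by positivity)
      _ = γ * cw / 2 := by field_simp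
  have hζb : ζ * K2 ≤ cw / 2 := by
    have h : ζ ≤ cw / (2 * K2) :=
      le_trans (min_le_right (1:ℝ) _) (min_le_right (γ * cw / (2 * K1 ^ 2)) (cw / (2 * K2)))
    calc ζ * K2 ≤ (cw / (2 * K2)) * K2 := mul_le_mul_of_nonneg_right h hK2.le
      _ = cw / 2 := by field_simp
  refine ⟨ζ, hζ0, hζ1, 1 + cb + cz * cb, by positivity, fun u lam => ?_⟩
  obtain ⟨φ, hφ1, hφ2⟩ := hNit ζ hζ0 hζ1 u
  obtain ⟨hz1, hz2⟩ := hA1 (ζ • φ)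
  -- notation
  set Gn := ‖G u‖ with hGn
  set T := ‖t u‖ with hT
  set R := ‖j lam + d u‖ with hR
  have hGn0 : (0:ℝ) ≤ Gn := norm_nonneg _
  have hT0 : (0:ℝ) ≤ T := norm_nonneg _
  have hR0 : (0:ℝ) ≤ R := norm_nonneg _
  -- bounds coming from the Nitsche stability function
  have hSφ : ‖G φ‖ ^ 2 + ‖t φ‖ ^ 2 ≤ (cb * T) ^ 2 := by
    have h := hφ1
    have hnn : (0:ℝ) ≤ cb * T := le_trans (Real.sqrt_nonneg _) h
    have := Real.sq_sqrt (show (0:ℝ) ≤ ‖G φ‖ ^ 2 + ‖t φ‖ ^ 2 by positivity)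
    nlinarith [Real.sqrt_nonneg (‖G φ‖ ^ 2 + ‖t φ‖ ^ 2)]
  have hGφ : ‖G φ‖ ≤ cb * T := by
    have hnn : (0:ℝ) ≤ cb * T := le_trans (Real.sqrt_nonneg _) hφ1
    nlinarith [norm_nonneg (G φ), norm_nonneg (t φ)]
  have htφ : ‖t φ‖ ≤ cb * T := by
    have hnn : (0:ℝ) ≤ cb * T := le_trans (Real.sqrt_nonneg _) hφ1
    nlinarith [norm_nonneg (G φ), norm_nonneg (t φ)]
  have hGv : ‖G (ζ • φ)‖ = ζ * ‖G φ‖ := by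
    rw [map_smul, norm_smul, Real.norm_eq_abs, abs_of_pos hζ0]
  have htv : ‖t (ζ • φ)‖ = ζ * ‖t φ‖ := by
    rw [map_smul, norm_smul, Real.norm_eq_abs, abs_of_pos hζ0]
  have hGvle : ‖G (ζ • φ)‖ ≤ ζ * (cb * T) := by
    rw [hGv]; exact mul_le_mul_of_nonneg_left hGφ hζ0.le
  have htvle : ‖t (ζ • φ)‖ ≤ ζ * (cb * T) := by
    rw [htv]; exact mul_le_mul_of_nonneg_left htφ hζ0.le
  -- the error term σ
  have hσ : ‖j (z (ζ • φ)) + d (ζ • φ)‖ ≤ (cz + ct) * (ζ * (cb * T)) := by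
    calc ‖j (z (ζ • φ)) + d (ζ • φ)‖ ≤ ‖j (z (ζ • φ))‖ + ‖d (ζ • φ)‖ := norm_add_le _ _
      _ ≤ cz * ‖G (ζ • φ)‖ + ct * ‖G (ζ • φ)‖ := add_le_add hz2 (htrace _)
      _ = (cz + ct) * ‖G (ζ • φ)‖ := by ring
      _ ≤ (cz + ct) * (ζ * (cb * T)) := by
          apply mul_le_mul_of_nonneg_left hGvle (by positivity)
  refine ⟨φ, ⟨hφ1, hφ2⟩, ?_, ?_⟩
  · -- coercivity
    have hid : ⟪G u, G (u + ζ • φ)⟫ + ⟪j lam, t (u + ζ • φ)⟫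
          - ⟪j (lam + z (ζ • φ)), t u⟫
          + γ * ⟪j lam + d u, j (lam + z (ζ • φ)) + d (u + ζ • φ)⟫
        = (⟪G u, G (u + ζ • φ)⟫ - ⟪d u, t (u + ζ • φ)⟫ + ⟪d (u + ζ • φ), t u⟫)
          + ⟪j lam + d u, t (ζ • φ)⟫
          - ⟪j (z (ζ • φ)) + d (ζ • φ), t u⟫
          + γ * ⟪j lam + d u, j lam + d u⟫
          + γ * ⟪j lam + d u, j (z (ζ • φ)) + d (ζ • φ)⟫ := by
      simp only [map_add, map_smul, inner_add_left, inner_add_right,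
        real_inner_smul_left, real_inner_smul_right]
      ring
    rw [hid]
    have hRR : ⟪j lam + d u, j lam + d u⟫ = R ^ 2 := real_inner_self_eq_norm_sq _
    have hX1 : -(R * (ζ * (cb * T))) ≤ ⟪j lam + d u, t (ζ • φ)⟫ := by
      have h1 := abs_real_inner_le_norm (j lam + d u) (t (ζ • φ))
      have h2 : R * ‖t (ζ • φ)‖ ≤ R * (ζ * (cb * T)) := mul_le_mul_of_nonneg_left htvle hR0
      have := neg_abs_le ⟪j lam + d u, t (ζ • φ)⟫
      linarith
    have hX2 : ⟪j (z (ζ • φ)) + d (ζ • φ), t u⟫ ≤ Cz * Gn * (ζ * (cb * T)) := by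
      have h1 := hz1 u
      have h2 : Cz * Gn * ‖G (ζ • φ)‖ ≤ Cz * Gn * (ζ * (cb * T)) :=
        mul_le_mul_of_nonneg_left hGvle (by positivity)
      have := le_abs_self ⟪j (z (ζ • φ)) + d (ζ • φ), t u⟫
      linarith
    have hX3 : -(R * ((cz + ct) * (ζ * (cb * T)))) ≤ ⟪j lam + d u, j (z (ζ • φ)) + d (ζ • φ)⟫ := by
      have h1 := abs_real_inner_le_norm (j lam + d u) (j (z (ζ • φ)) + d (ζ • φ))
      have h2 : R * ‖j (z (ζ • φ)) + d (ζ • φ)‖ ≤ R * ((cz + ct) * (ζ * (cb * T))) :=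
        mul_le_mul_of_nonneg_left hσ hR0
      have := neg_abs_le ⟪j lam + d u, j (z (ζ • φ)) + d (ζ • φ)⟫
      linarith
    have hkey := arith_key ζ K1 K2 R T Gn γ cw hγ hcw hK1 hK2 hR0 hT0 hGn0 hζ0 hζ1 hζa hζb
    rw [hRR]
    have hγX3 : -(γ * (R * ((cz + ct) * (ζ * (cb * T)))))
        ≤ γ * ⟪j lam + d u, j (z (ζ • φ)) + d (ζ • φ)⟫ := by
      have := mul_le_mul_of_nonneg_left hX3 hγ.le
      linarith [this]
    have hK1exp : ζ * K1 * R * T = R * (ζ * (cb * T)) + γ * (R * ((cz + ct) * (ζ * (cb * T)))) := by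
      rw [hK1def]; ring
    have hK2exp : ζ * K2 * Gn * T = Cz * Gn * (ζ * (cb * T)) := by
      rw [hK2def]; ring
    rw [hK1exp, hK2exp] at hkey
    linarith [hφ2, hX1, hX2, hγX3, hkey]
  · -- stability
    have hGw : ‖G (u + ζ • φ)‖ ≤ Gn + ‖G (ζ • φ)‖ := by
      rw [map_add]; exact norm_add_le _ _
    have htw : ‖t (u + ζ • φ)‖ ≤ T + ‖t (ζ • φ)‖ := by
      rw [map_add]; exact norm_add_le _ _
    have hmono : ‖G (u + ζ • φ)‖ ^ 2 + ‖t (u + ζ • φ)‖ ^ 2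
        ≤ (Gn + ‖G (ζ • φ)‖) ^ 2 + (T + ‖t (ζ • φ)‖) ^ 2 := by
      nlinarith [norm_nonneg (G (u + ζ • φ)), norm_nonneg (t (u + ζ • φ)),
        norm_nonneg (G (ζ • φ)), norm_nonneg (t (ζ • φ))]
    have h1 : Real.sqrt (‖G (u + ζ • φ)‖ ^ 2 + ‖t (u + ζ • φ)‖ ^ 2)
        ≤ Real.sqrt (Gn ^ 2 + T ^ 2) + Real.sqrt (‖G (ζ • φ)‖ ^ 2 + ‖t (ζ • φ)‖ ^ 2) := by
      refine le_trans (Real.sqrt_le_sqrt hmono) ?_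
      exact sqrt_two_triangle Gn T ‖G (ζ • φ)‖ ‖t (ζ • φ)‖ hGn0 hT0 (norm_nonneg _) (norm_nonneg _)
    have hcbT0 : (0:ℝ) ≤ cb * T := le_trans (Real.sqrt_nonneg _) hφ1
    have h2 : Real.sqrt (‖G (ζ • φ)‖ ^ 2 + ‖t (ζ • φ)‖ ^ 2) ≤ cb * T := by
      have hle : ‖G (ζ • φ)‖ ^ 2 + ‖t (ζ • φ)‖ ^ 2 ≤ (cb * T) ^ 2 := by
        rw [hGv, htv]
        have hζsq : ζ^2 ≤ 1 := by
          calc ζ^2 ≤ 1^2 := pow_le_pow_left₀ hζ0.le hζ1 2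
            _ = 1 := one_pow 2
        have heq : (ζ * ‖G φ‖)^2 + (ζ * ‖t φ‖)^2 = ζ^2 * (‖G φ‖^2 + ‖t φ‖^2) := by ring
        rw [heq]
        calc ζ^2 * (‖G φ‖^2 + ‖t φ‖^2) ≤ 1 * ((cb*T)^2) :=
              mul_le_mul hζsq hSφ (by positivity) zero_le_one
          _ = (cb*T)^2 := one_mul _
      have := Real.sqrt_le_sqrt hle
      rwa [Real.sqrt_sq hcbT0] at this
    have hTle : T ≤ Real.sqrt (Gn ^ 2 + T ^ 2) := by
      have := le_sqrt_sq_add T Gn hT0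
      rwa [add_comm (T^2) (Gn^2)] at this
    have hjμ : ‖j (lam + z (ζ • φ))‖ ≤ ‖j lam‖ + cz * (cb * T) := by
      calc ‖j (lam + z (ζ • φ))‖ ≤ ‖j lam‖ + ‖j (z (ζ • φ))‖ := by
            rw [map_add]; exact norm_add_le _ _
        _ ≤ ‖j lam‖ + cz * ‖G (ζ • φ)‖ := by linarith [hz2]
        _ ≤ ‖j lam‖ + cz * (cb * T) := by
            have hbb : (0:ℝ) ≤ cb * T := le_trans (Real.sqrt_nonneg _) hφ1
            have h5 : ζ * (cb * T) ≤ cb * T := mul_le_of_le_one_left hbb hζ1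
            have h6 : cz * ‖G (ζ • φ)‖ ≤ cz * (cb * T) :=
              mul_le_mul_of_nonneg_left (le_trans hGvle h5) hcz.le
            linarith
    have hNu0 : (0:ℝ) ≤ Real.sqrt (Gn ^ 2 + T ^ 2) := Real.sqrt_nonneg _
    have hjl0 : (0:ℝ) ≤ ‖j lam‖ := norm_nonneg _
    have e1 : cb * T ≤ cb * Real.sqrt (Gn ^ 2 + T ^ 2) := mul_le_mul_of_nonneg_left hTle hcb.le
    have e2 : cz * (cb * T) ≤ cz * (cb * Real.sqrt (Gn ^ 2 + T ^ 2)) :=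
      mul_le_mul_of_nonneg_left e1 hcz.le
    have e3 : (0:ℝ) ≤ cb * ‖j lam‖ := mul_nonneg hcb.le hjl0
    have e4 : (0:ℝ) ≤ cz * (cb * ‖j lam‖) := mul_nonneg hcz.le e3
    linarith [h1, h2, hjμ, e1, e2, e3, e4]
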